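/- arXiv:2403.06132 — 6 statements merged into one kernel-verified Lean document; each statement's English description precedes it below -/
import Mathlib

section
/- Let G be a connected graph and H a 3-induced subgraph of G (i.e., for all x,y in V(H), if d_G(x,y) ≤ 3 then d_H(x,y) = d_G(x,y)). If the 3-distance graph D_3(H) is connected, and for every vertex x in V(G)\V(H) there exists y in V(H) with d_G(x,y) ≥ 3, then D_3(G) is connected. -/
open SimpleGraph

/-- The `k`-distance graph of `G`: vertices adjacent iff their distance in `G` is exactly `k`. -/
def distGraph {V : Type*} (G : SimpleGraph V) (k : ℕ) : SimpleGraph V where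
  Adj x y := x ≠ y ∧ G.dist x y = k
  symm := ⟨fun x y ⟨h1, h2⟩ => ⟨h1.symm, by rwa [SimpleGraph.dist_comm]⟩⟩
  loopless := ⟨fun x ⟨h, _⟩ => h rfl⟩

section aux
variable {V : Type*} {G : SimpleGraph V}

lemma aux_step (hG : G.Connected) {u y : V} {n : ℕ} (h : G.dist u y = n + 1) :
    ∃ w, G.Adj u w ∧ G.dist w y = n := by
  obtain ⟨p, hp⟩ := hG.exists_walk_length_eq_dist u y
  cases p with
  | nil => rw [dist_self] at h; omega
  | @cons _ w _ hadj q =>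
      refine ⟨w, hadj, ?_⟩
      have h1 : G.dist w y ≤ n := by
        have := SimpleGraph.dist_le q
        simp only [Walk.length_cons] at hp
        omega
      have h2 : G.dist u y ≤ G.dist u w + G.dist w y := hG.dist_triangle
      have h3 : G.dist u w ≤ 1 := by simpa using SimpleGraph.dist_le hadj.toWalk
      omega

lemma aux_three (hG : G.Connected) {u y : V} (h3 : 3 ≤ G.dist u y) :
    ∃ w, G.dist u w = 3 ∧ G.dist w y = G.dist u y - 3 := by
  obtain ⟨n, hn⟩ : ∃ n, G.dist u y = n + 3 := ⟨G.dist u y - 3, by omega⟩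
  obtain ⟨w1, a1, d1⟩ := aux_step hG (show G.dist u y = (n+2) + 1 by omega)
  obtain ⟨w2, a2, d2⟩ := aux_step hG (show G.dist w1 y = (n+1) + 1 by omega)
  obtain ⟨w3, a3, d3⟩ := aux_step hG d2
  have hle : G.dist u w3 ≤ 3 := by
    simpa using SimpleGraph.dist_le (Walk.cons a1 (Walk.cons a2 a3.toWalk))
  have htr : G.dist u y ≤ G.dist u w3 + G.dist w3 y := hG.dist_triangle
  exact ⟨w3, by omega, by omega⟩

lemma find_pair {W : Type*} {K : SimpleGraph W} (f : W → ℕ) :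
    ∀ {a b : W}, K.Walk a b → f a ≤ 2 → 3 ≤ f b →
      ∃ c d, K.Adj c d ∧ f c ≤ 2 ∧ 3 ≤ f d
  | _, _, Walk.nil, ha, hb => absurd hb (by omega)
  | _, _, Walk.cons h q, ha, hb =>
    if h2 : f _ ≤ 2 then find_pair f q h2 hb
    else ⟨_, _, h, ha, by omega⟩

end aux

/-- If `H` is a 3-induced subgraph of a connected graph `G`, `D₃(H)` is connected,
and every vertex of `G` outside `H` has some vertex of `H` at distance ≥ 3, then `D₃(G)` is
connected. -/
theorem stmt_0 {V : Type*} (G : SimpleGraph V) (hG : G.Connected) (H : G.Subgraph)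
    (h3ind : ∀ x y : H.verts, G.dist x y ≤ 3 → H.coe.dist x y = G.dist x y)
    (hH : (distGraph H.coe 3).Connected)
    (hfar : ∀ x : V, x ∉ H.verts → ∃ y ∈ H.verts, 3 ≤ G.dist x y) :
    (distGraph G 3).Connected := by
  -- G-distance 3 between H-vertices from D₃(H)-adjacency
  have hdist3 : ∀ a b : H.verts, (distGraph H.coe 3).Adj a b → G.dist a.1 b.1 = 3 := by
    rintro a b ⟨hne, hd⟩
    have hle : G.dist a.1 b.1 ≤ 3 := by
      obtain ⟨p, hp⟩ := SimpleGraph.exists_walk_of_dist_ne_zero (by rw [hd]; norm_num)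
      have := SimpleGraph.dist_le (p.map (SimpleGraph.Subgraph.hom H))
      rwa [Walk.length_map, hp, hd] at this
    have := h3ind a b hle
    omega
  have hmap : ∀ a b : H.verts, (distGraph H.coe 3).Adj a b →
      (distGraph G 3).Adj a.1 b.1 := by
    rintro a b hab
    exact ⟨fun h => hab.1 (Subtype.ext h), hdist3 a b hab⟩
  -- all of H lies in one component of D₃(G)
  have H_reach : ∀ a b : H.verts, (distGraph G 3).Reachable a.1 b.1 := by
    intro a b
    exact Reachable.map ⟨Subtype.val, fun h => hmap _ _ h⟩ (hH.preconnected a b)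
  -- crux: a vertex outside H within distance 2 of H has an H-vertex at distance exactly 3
  have crux : ∀ w ∉ H.verts, ∀ y ∈ H.verts, G.dist w y ≤ 2 →
      ∃ z ∈ H.verts, G.dist w z = 3 := by
    intro w hw y hy hwy
    obtain ⟨y'', hy'', hfar''⟩ := hfar w hw
    obtain ⟨p⟩ := hH.preconnected ⟨y, hy⟩ ⟨y'', hy''⟩
    obtain ⟨a, b, hab, hfa, hfb⟩ :=
      find_pair (fun z : H.verts => G.dist w z.1) p hwy hfar''
    have hGab : G.dist a.1 b.1 = 3 := hdist3 a b hab
    -- get a length-3 path in H.coe from a to b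
    have hHd : H.coe.dist a b = 3 := by
      rw [h3ind a b (le_of_eq hGab)]; exact hGab
    obtain ⟨q, hq⟩ := SimpleGraph.exists_walk_of_dist_ne_zero (by rw [hHd]; norm_num)
    rw [hHd] at hq
    set p1 : H.verts := q.getVert 1 with hp1
    set p2 : H.verts := q.getVert 2 with hp2
    have adj1 : H.coe.Adj a p1 := by
      have := q.adj_getVert_succ (i := 0) (by omega)
      rwa [q.getVert_zero] at this
    have adj2 : H.coe.Adj p1 p2 := q.adj_getVert_succ (i := 1) (by omega)
    have adj3 : H.coe.Adj p2 b := by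
      have := q.adj_getVert_succ (i := 2) (by omega)
      rwa [show (2 : ℕ) + 1 = q.length from by omega, q.getVert_length] at this
    have g1 : G.Adj a.1 p1.1 := (SimpleGraph.Subgraph.coe_adj H a p1).mp adj1 |>.adj_sub
    have g2 : G.Adj p1.1 p2.1 := (SimpleGraph.Subgraph.coe_adj H p1 p2).mp adj2 |>.adj_sub
    have g3 : G.Adj p2.1 b.1 := (SimpleGraph.Subgraph.coe_adj H p2 b).mp adj3 |>.adj_sub
    by_cases c1 : G.dist w p1.1 = 3
    · exact ⟨p1.1, p1.2, c1⟩
    by_cases c2 : G.dist w p2.1 = 3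
    · exact ⟨p2.1, p2.2, c2⟩
    by_cases c3 : G.dist w b.1 = 3
    · exact ⟨b.1, b.2, c3⟩
    · exfalso
      have t1 : G.dist w p1.1 ≤ G.dist w a.1 + G.dist a.1 p1.1 := hG.dist_triangle
      have t2 : G.dist w p2.1 ≤ G.dist w p1.1 + G.dist p1.1 p2.1 := hG.dist_triangle
      have t3 : G.dist w b.1 ≤ G.dist w p2.1 + G.dist p2.1 b.1 := hG.dist_triangle
      have e1 : G.dist a.1 p1.1 ≤ 1 := by simpa using SimpleGraph.dist_le g1.toWalk
      have e2 : G.dist p1.1 p2.1 ≤ 1 := by simpa using SimpleGraph.dist_le g2.toWalk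
      have e3 : G.dist p2.1 b.1 ≤ 1 := by simpa using SimpleGraph.dist_le g3.toWalk
      omega
  -- reaching a fixed base vertex of H
  obtain ⟨⟨y₀, hy₀⟩⟩ := hH.nonempty
  have adj_of_dist3 : ∀ u z : V, G.dist u z = 3 → (distGraph G 3).Adj u z := by
    intro u z h
    refine ⟨fun he => ?_, h⟩
    rw [he, dist_self] at h; omega
  have key : ∀ n : ℕ, ∀ u y : V, y ∈ H.verts → G.dist u y = n → 3 ≤ n →
      (distGraph G 3).Reachable u y₀ := by
    intro n
    induction n using Nat.strong_induction_on with
    | _ n ih =>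
      intro u y hy hd h3
      obtain ⟨w, hw3, hwy⟩ := aux_three hG (hd ▸ h3)
      have r1 : (distGraph G 3).Reachable u w := (adj_of_dist3 u w hw3).reachable
      by_cases hwH : w ∈ H.verts
      · exact r1.trans (H_reach ⟨w, hwH⟩ ⟨y₀, hy₀⟩)
      · rcases lt_or_ge (G.dist w y) 3 with hlt | hge
        · obtain ⟨z, hzH, hz3⟩ := crux w hwH y hy (by omega)
          exact r1.trans ((adj_of_dist3 w z hz3).reachable.trans
            (H_reach ⟨z, hzH⟩ ⟨y₀, hy₀⟩))
        · exact r1.trans (ih (n - 3) (by omega) w y hy (by omega) (by omega))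
  have toBase : ∀ u : V, (distGraph G 3).Reachable u y₀ := by
    intro u
    by_cases huH : u ∈ H.verts
    · exact H_reach ⟨u, huH⟩ ⟨y₀, hy₀⟩
    · obtain ⟨y, hy, h3⟩ := hfar u huH
      exact key (G.dist u y) u y hy rfl h3
  rw [connected_iff]
  exact ⟨fun u v => (toBase u).trans (toBase v).symm, hG.nonempty⟩
end

section
/- Let G be a connected graph and H a subgraph of G containing two vertices a, b with d_H(a,b) = d_G(a,b) = 5. If H is 3-induced in G and D_3(H) is connected, then D_3(G) is connected. -/
open SimpleGraph

section helpers

variable {V : Type*} {W : Type*} {G : SimpleGraph V} {G' : SimpleGraph W}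

lemma distGraph_adj (k : ℕ) (x y : V) :
    (distGraph G k).Adj x y ↔ x ≠ y ∧ G.dist x y = k := Iff.rfl

lemma myGetVert_map (f : G →g G') {u v : V} (p : G.Walk u v) :
    ∀ i, (p.map f).getVert i = f (p.getVert i) := by
  induction p with
  | nil => intro i; simp [Walk.getVert]
  | cons h q ih =>
      intro i
      cases i with
      | zero => simp
      | succ n => simpa using ih n

lemma myWalkSplit {u v : V} (p : G.Walk u v) :
    ∀ i, i ≤ p.length → ∃ (q : G.Walk u (p.getVert i)) (r : G.Walk (p.getVert i) v),
      q.length = i ∧ r.length = p.length - i := by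
  induction p with
  | nil =>
      intro i hi
      simp only [Walk.length_nil, Nat.le_zero] at hi
      subst hi
      exact ⟨Walk.nil, Walk.nil, rfl, rfl⟩
  | cons h q ih =>
      intro i hi
      cases i with
      | zero => exact ⟨Walk.nil, Walk.cons h q, rfl, rfl⟩
      | succ n =>
          obtain ⟨q', r', h1, h2⟩ := ih n (by simpa using hi)
          exact ⟨Walk.cons h q', r', by simp [h1], by simpa using h2⟩

lemma myDistGetVert (hG : G.Connected) {u v : V} (p : G.Walk u v)
    (hp : p.length = G.dist u v) {i : ℕ} (hi : i ≤ p.length) :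
    G.dist u (p.getVert i) = i ∧ G.dist (p.getVert i) v = p.length - i := by
  obtain ⟨q, r, hq, hr⟩ := myWalkSplit p i hi
  have h1 : G.dist u (p.getVert i) ≤ i := le_trans (SimpleGraph.dist_le q) hq.le
  have h2 : G.dist (p.getVert i) v ≤ p.length - i := le_trans (SimpleGraph.dist_le r) hr.le
  have h3 := hG.dist_triangle (u := u) (v := p.getVert i) (w := v)
  omega

end helpers

/-- If `H ≤ G` is 3-induced, contains vertices `a, b` with
`d_H(a,b) = d_G(a,b) = 5`, and `D₃(H)` is connected, then `D₃(G)` is connected. -/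
theorem stmt_1 {V : Type*} (G : SimpleGraph V) (hG : G.Connected) (H : G.Subgraph)
    (a b : H.verts) (haH : H.coe.dist a b = 5) (haG : G.dist a b = 5)
    (h3ind : ∀ x y : H.verts, G.dist x y ≤ 3 → H.coe.dist x y = G.dist x y)
    (hH : (distGraph H.coe 3).Connected) :
    (distGraph G 3).Connected := by
  classical
  have tri : ∀ u v w : V, G.dist u w ≤ G.dist u v + G.dist v w := fun _ _ _ => hG.dist_triangle
  have comm : ∀ u w : V, G.dist u w = G.dist w u := fun u w => SimpleGraph.dist_comm
  -- D3-reachability from a distance-3 pair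
  have hr3 : ∀ u w : V, G.dist u w = 3 → (distGraph G 3).Reachable u w := by
    intro u w h
    refine SimpleGraph.Adj.reachable (G := distGraph G 3) ?_
    refine (distGraph_adj 3 u w).2 ⟨fun he => ?_, h⟩
    subst he
    rw [SimpleGraph.dist_self] at h
    omega
  -- reachability in D3(H) maps to D3(G)
  have hcoeReach : ∀ z w : H.verts, (distGraph H.coe 3).Reachable z w →
      (distGraph G 3).Reachable (z : V) (w : V) := by
    intro z w hzw
    refine SimpleGraph.Reachable.map
      (⟨Subtype.val, ?_⟩ : distGraph H.coe 3 →g distGraph G 3) hzw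
    intro z' w' hadj
    obtain ⟨hne, hd⟩ := (distGraph_adj 3 z' w').1 hadj
    have hrzw : H.coe.Reachable z' w' := Reachable.of_dist_ne_zero (by omega)
    obtain ⟨q, hq⟩ := hrzw.exists_walk_length_eq_dist
    have hle : G.dist (z' : V) (w' : V) ≤ 3 := by
      have h1 := SimpleGraph.dist_le (q.map H.hom)
      rw [Walk.length_map, hq, hd] at h1
      exact h1
    have heq := h3ind z' w' hle
    refine (distGraph_adj 3 _ _).2 ⟨fun he => hne (Subtype.ext he), by omega⟩
  -- a geodesic of length 5 from a to b inside H
  have hrH : H.coe.Reachable a b := Reachable.of_dist_ne_zero (by omega)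
  obtain ⟨p0, hp0⟩ := hrH.exists_walk_length_eq_dist
  rw [haH] at hp0
  set p : G.Walk (a : V) (b : V) := p0.map H.hom with hpdef
  have hplen : p.length = 5 := by rw [hpdef]; exact (Walk.length_map H.hom p0).trans hp0
  have hpd : p.length = G.dist (a : V) (b : V) := by rw [hplen, haG]
  set x : ℕ → V := fun i => p.getVert i with hxdef
  have hxa : ∀ i, i ≤ 5 → G.dist (a : V) (x i) = i := by
    intro i hi
    exact (myDistGetVert hG p hpd (by omega)).1
  have hxb : ∀ i, i ≤ 5 → G.dist (x i) (b : V) = 5 - i := by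
    intro i hi
    have h := (myDistGetVert hG p hpd (show i ≤ p.length by omega)).2
    rwa [hplen] at h
  have hx5 : x 5 = (b : V) := by
    show p.getVert 5 = (b : V)
    rw [show (5 : ℕ) = p.length from hplen.symm]
    exact p.getVert_length
  have hstep : ∀ i, i < 5 → G.dist (x i) (x (i + 1)) = 1 := by
    intro i hi
    exact SimpleGraph.dist_eq_one_iff_adj.2 (p.adj_getVert_succ (by omega))
  -- every geodesic vertex reaches a in D3(G)
  have hxC : ∀ i, i ≤ 5 → (distGraph G 3).Reachable (x i) (a : V) := by
    intro i hi
    have hx : x i = ((p0.getVert i : H.verts) : V) := myGetVert_map H.hom p0 i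
    rw [hx]
    exact hcoeReach _ _ (hH.preconnected (p0.getVert i) a)
  -- main claim
  have key : ∀ n : ℕ, ∀ v : V, G.dist v (a : V) = n → (distGraph G 3).Reachable v (a : V) := by
    intro n
    induction n using Nat.strong_induction_on with
    | _ n ih =>
      intro v hv
      by_cases h3 : 3 ≤ n
      · obtain ⟨w, hw⟩ := (hG.preconnected v (a : V)).exists_walk_length_eq_dist
        have hwd : w.length = G.dist v (a : V) := hw
        have hd := myDistGetVert hG w hwd (i := 3) (by omega)
        have hd2 : G.dist (w.getVert 3) (a : V) = n - 3 := by
          rw [hd.2, hwd, hv]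
        exact (hr3 _ _ hd.1).trans (ih (n - 3) (by omega) _ hd2)
      · have h012 : n = 0 ∨ n = 1 ∨ n = 2 := by omega
        have hav : G.dist (a : V) v = n := by rw [comm]; exact hv
        rcases h012 with h | h | h
        · subst h
          have : v = (a : V) := (hG.dist_eq_zero_iff).1 hv
          rw [this]
        · subst h
          have ha3 := hxa 3 (by omega)
          have t_lb := tri (a : V) v (x 3)
          have t_ub := tri v (a : V) (x 3)
          have hcase : G.dist v (x 3) = 2 ∨ G.dist v (x 3) = 3 ∨ G.dist v (x 3) = 4 := by omega
          rcases hcase with ht | ht | ht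
          · have ha4 := hxa 4 (by omega)
            have h1 := tri (a : V) v (x 4)
            have h2 := tri v (x 3) (x 4)
            have hs : G.dist (x 3) (x 4) = 1 := hstep 3 (by omega)
            have hd : G.dist v (x 4) = 3 := by omega
            exact (hr3 _ _ hd).trans (hxC 4 (by omega))
          · exact (hr3 _ _ ht).trans (hxC 3 (by omega))
          · have ha2 := hxa 2 (by omega)
            have h1 := tri v (a : V) (x 2)
            have h2 := tri v (x 2) (x 3)
            have hs : G.dist (x 2) (x 3) = 1 := hstep 2 (by omega)
            have hd : G.dist v (x 2) = 3 := by omega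
            exact (hr3 _ _ hd).trans (hxC 2 (by omega))
        · subst h
          have ha3 := hxa 3 (by omega)
          have hb3 := hxb 3 (by omega)
          have t_lb := tri (a : V) v (x 3)
          have t_ub := tri v (a : V) (x 3)
          have hreachb : (distGraph G 3).Reachable (x 5) (a : V) := hxC 5 (by omega)
          rw [hx5] at hreachb
          have hcase : G.dist v (x 3) = 1 ∨ G.dist v (x 3) = 2 ∨ G.dist v (x 3) = 3 ∨
              G.dist v (x 3) = 4 ∨ G.dist v (x 3) = 5 := by omega
          rcases hcase with ht | ht | ht | ht | ht
          · have h1 := tri (a : V) v (b : V)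
            have h2 := tri v (x 3) (b : V)
            have hd : G.dist v (b : V) = 3 := by omega
            exact (hr3 _ _ hd).trans hreachb
          · have h1 := tri (a : V) v (b : V)
            have h2 := tri v (x 3) (b : V)
            have hscase : G.dist v (b : V) = 3 ∨ G.dist v (b : V) = 4 := by omega
            rcases hscase with hs | hs
            · exact (hr3 _ _ hs).trans hreachb
            · have h3 := tri v (x 3) (x 4)
              have hst : G.dist (x 3) (x 4) = 1 := hstep 3 (by omega)
              have h4 := tri v (x 4) (b : V)
              have hb4 := hxb 4 (by omega)
              have hd : G.dist v (x 4) = 3 := by omega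
              exact (hr3 _ _ hd).trans (hxC 4 (by omega))
          · exact (hr3 _ _ ht).trans (hxC 3 (by omega))
          · have ha1 := hxa 1 (by omega)
            have h1 := tri v (a : V) (x 1)
            have h2 := tri v (x 1) (x 3)
            have h3 := tri (x 1) (x 2) (x 3)
            have hs1 : G.dist (x 1) (x 2) = 1 := hstep 1 (by omega)
            have hs2 : G.dist (x 2) (x 3) = 1 := hstep 2 (by omega)
            have hrcase : G.dist v (x 1) = 2 ∨ G.dist v (x 1) = 3 := by omega
            rcases hrcase with hr | hr
            · have h4 := tri v (x 1) (x 2)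
              have h5 := tri v (x 2) (x 3)
              have hd : G.dist v (x 2) = 3 := by omega
              exact (hr3 _ _ hd).trans (hxC 2 (by omega))
            · exact (hr3 _ _ hr).trans (hxC 1 (by omega))
          · have ha1 := hxa 1 (by omega)
            have h1 := tri v (a : V) (x 1)
            have h2 := tri v (x 1) (x 3)
            have h3 := tri (x 1) (x 2) (x 3)
            have hs1 : G.dist (x 1) (x 2) = 1 := hstep 1 (by omega)
            have hs2 : G.dist (x 2) (x 3) = 1 := hstep 2 (by omega)
            have hd : G.dist v (x 1) = 3 := by omega
            exact (hr3 _ _ hd).trans (hxC 1 (by omega))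
  rw [SimpleGraph.connected_iff]
  exact ⟨fun u v => (key _ u rfl).trans (key _ v rfl).symm, hG.nonempty⟩
end

section
/- If T is a star graph K_{1,n} (n ≥ 1) or a generalized double star GDS(l,m,n), then D_3(T) is disconnected. -/
open SimpleGraph

/-- The star `K_{1,n}`: the center `0` is adjacent to the `n` other vertices. -/
def starGraph (n : ℕ) : SimpleGraph (Fin (n + 1)) :=
  SimpleGraph.fromRel (fun i j => i.val = 0 ∧ j.val ≠ 0)

/-- The generalized double star `GDS(l,m,n)`: two stars `K_{1,m}` and `K_{1,n}` whose
centers (the vertices `m` and `m + l`) are joined by a path of length `l`.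
The vertices `0, …, m-1` are the leaves of the first center, the path is
`m, m+1, …, m+l`, and `m+l+1, …, m+l+n` are the leaves of the second center. -/
def GDS (l m n : ℕ) : SimpleGraph (Fin (m + l + 1 + n)) :=
  SimpleGraph.fromRel (fun i j =>
    (i.val < m ∧ j.val = m) ∨ (m ≤ i.val ∧ i.val < m + l ∧ j.val = i.val + 1) ∨
    (i.val = m + l ∧ m + l < j.val))

def hfun (l m : ℕ) {N : ℕ} (v : Fin N) : ℤ :=
  if v.val < m then -1 else if v.val ≤ m + l then (v.val : ℤ) - m else l + 1

lemma gds_adj_iff (l m n : ℕ) (u v : Fin (m + l + 1 + n)) :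
    (GDS l m n).Adj u v ↔ u.val ≠ v.val ∧
      (((u.val < m ∧ v.val = m) ∨ (m ≤ u.val ∧ u.val < m + l ∧ v.val = u.val + 1) ∨
        (u.val = m + l ∧ m + l < v.val)) ∨
       ((v.val < m ∧ u.val = m) ∨ (m ≤ v.val ∧ v.val < m + l ∧ u.val = v.val + 1) ∨
        (v.val = m + l ∧ m + l < u.val))) := by
  rw [GDS, SimpleGraph.fromRel_adj]; simp [Fin.ext_iff]

lemma gds_step (l m n : ℕ) (u v : Fin (m + l + 1 + n)) (h : (GDS l m n).Adj u v) :
    hfun l m v = hfun l m u + 1 ∨ hfun l m u = hfun l m v + 1 := by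
  rw [gds_adj_iff] at h
  unfold hfun
  split_ifs <;> omega

lemma gds_step_back (l m n : ℕ) (u v : Fin (m + l + 1 + n))
    (h : hfun l m v = hfun l m u + 1) : (GDS l m n).Adj u v := by
  rw [gds_adj_iff]
  have hu := u.isLt
  have hv := v.isLt
  unfold hfun at h
  split_ifs at h <;> omega

lemma gds_d3 (l m n : ℕ) (u v : Fin (m + l + 1 + n))
    (h : (distGraph (GDS l m n) 3).Adj u v) : (3 : ℤ) ∣ (hfun l m v - hfun l m u) := by
  obtain ⟨hne, hd⟩ := h
  have hnz : (GDS l m n).dist u v ≠ 0 := by rw [hd]; norm_num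
  obtain ⟨w, hw⟩ := SimpleGraph.exists_walk_of_dist_ne_zero hnz
  rw [hd] at hw
  cases w with
  | nil => simp at hw
  | cons h1 w1 =>
    cases w1 with
    | nil => simp at hw
    | cons h2 w2 =>
      cases w2 with
      | nil => simp at hw
      | cons h3 w3 =>
        cases w3 with
        | nil =>
          have s1 := gds_step _ _ _ _ _ h1
          have s2 := gds_step _ _ _ _ _ h2
          have s3 := gds_step _ _ _ _ _ h3
          -- total change is odd with abs ≤ 3; rule out ±1 via adjacency
          rcases s1 with s1 | s1 <;> rcases s2 with s2 | s2 <;> rcases s3 with s3 | s3 <;>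
          · first
            | omega
            | (exfalso
               have hadj : (GDS l m n).Adj u v ∨ (GDS l m n).Adj v u := by
                 first
                   | exact Or.inl (gds_step_back l m n u v (by omega))
                   | exact Or.inr (gds_step_back l m n v u (by omega))
               have : (GDS l m n).dist u v ≤ 1 := by
                 rcases hadj with hadj | hadj
                 · simpa using SimpleGraph.dist_le hadj.toWalk
                 · rw [SimpleGraph.dist_comm]
                   simpa using SimpleGraph.dist_le hadj.toWalk
               omega)
        | cons h4 w4 => simp [SimpleGraph.Walk.length_cons] at hw

lemma reach_inv {V : Type*} {G : SimpleGraph V} {c : V → ℤ}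
    (h : ∀ u v, G.Adj u v → (3 : ℤ) ∣ (c v - c u)) {a b : V} (r : G.Reachable a b) :
    (3 : ℤ) ∣ (c b - c a) := by
  obtain ⟨w⟩ := r
  induction w with
  | nil => simp
  | cons ha _ ih => have := h _ _ ha; omega


/-- The 3-distance graph of a star `K_{1,n}` (`n ≥ 1`) and of a generalized
double star `GDS(l,m,n)` (`l, m, n ≥ 1`) is disconnected. -/
theorem stmt_4 :
    (∀ n : ℕ, 1 ≤ n → ¬ (distGraph (_root_.starGraph n) 3).Connected) ∧
    (∀ l m n : ℕ, 1 ≤ l → 1 ≤ m → 1 ≤ n → ¬ (distGraph (GDS l m n) 3).Connected) := by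
  constructor
  · intro n hn hc
    -- star has diameter ≤ 2, so distGraph has no edges
    have hnoadj : ∀ u v : Fin (n + 1), ¬ (distGraph (_root_.starGraph n) 3).Adj u v := by
      intro u v ⟨hne, hd⟩
      have hle : (_root_.starGraph n).dist u v ≤ 2 := by
        have hadj0 : ∀ x : Fin (n + 1), x ≠ 0 → (_root_.starGraph n).Adj 0 x := by
          intro x hx
          rw [_root_.starGraph, SimpleGraph.fromRel_adj]
          refine ⟨(Ne.symm hx), Or.inl ⟨rfl, ?_⟩⟩
          exact fun h => hx (Fin.ext (by simp [h]))
        by_cases hu : u = 0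
        · subst hu
          have := SimpleGraph.dist_le (hadj0 v (Ne.symm hne)).toWalk
          simpa using this.trans (by norm_num)
        · by_cases hv : v = 0
          · subst hv
            have := SimpleGraph.dist_le ((hadj0 u hu).symm).toWalk
            simpa using this.trans (by norm_num)
          · have hwl := SimpleGraph.dist_le
              (((hadj0 u hu).symm.toWalk).append (hadj0 v hv).toWalk)
            simp [SimpleGraph.Walk.length_append] at hwl
            omega
      omega
    -- hence reachable implies equal; but 0 ≠ 1
    have h01 : (distGraph (_root_.starGraph n) 3).Reachable 0 ⟨1, by omega⟩ :=
      hc.preconnected 0 ⟨1, by omega⟩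
    obtain ⟨w⟩ := h01
    cases w with
    | cons h _ => exact hnoadj _ _ h
  · intro l m n hl hm hn hc
    have hx : m < m + l + 1 + n := by omega
    have r : (distGraph (GDS l m n) 3).Reachable ⟨0, by omega⟩ ⟨m, hx⟩ :=
      hc.preconnected _ _
    have := reach_inv (gds_d3 l m n) r
    unfold hfun at this
    simp only at this
    split_ifs at this <;> omega
end

section
/- Let G be a unicyclic graph whose unique cycle has length n with n ≥ 7 and gcd(n,3) = 1. Then D_3(G) is connected. -/
open SimpleGraph

namespace StmtAux

variable {V : Type*}

/-- getVert is injective on a path. -/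
lemma getVert_injOn {G : SimpleGraph V} {x y : V} {p : G.Walk x y} (hp : p.IsPath) :
    ∀ i ≤ p.length, ∀ j ≤ p.length, p.getVert i = p.getVert j → i = j := by
  induction p with
  | nil => intro i hi j hj _; simp only [Walk.length_nil, Nat.le_zero] at hi hj; omega
  | cons h q ih =>
    intro i hi j hj hij
    match i, j with
    | 0, 0 => rfl
    | 0, (j+1) =>
      exfalso
      rw [Walk.getVert_zero, Walk.getVert_cons_succ] at hij
      exact ((Walk.cons_isPath_iff _ _).1 hp).2
        (Walk.mem_support_iff_exists_getVert.2 ⟨j, hij.symm, by simpa using hj⟩)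
    | (i+1), 0 =>
      exfalso
      rw [Walk.getVert_zero, Walk.getVert_cons_succ] at hij
      exact ((Walk.cons_isPath_iff _ _).1 hp).2
        (Walk.mem_support_iff_exists_getVert.2 ⟨i, hij, by simpa using hi⟩)
    | (i+1), (j+1) =>
      rw [Walk.getVert_cons_succ, Walk.getVert_cons_succ] at hij
      have := ih hp.of_cons i (by simpa using hi) j (by simpa using hj) hij
      omega

/-- a segment of a path between positions p and p+k, as a path -/
lemma exists_seg {G : SimpleGraph V} {x y : V} {Q : G.Walk x y} (hQ : Q.IsPath) :
    ∀ (k p : ℕ), p + k ≤ Q.length →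
    ∃ W : G.Walk (Q.getVert p) (Q.getVert (p + k)), W.length = k ∧ W.IsPath ∧
      (∀ z ∈ W.support, ∃ s, p ≤ s ∧ s ≤ p + k ∧ z = Q.getVert s) := by
  intro k
  induction k with
  | zero => intro p _
            refine ⟨Walk.nil.copy rfl (by rw [Nat.add_zero]), by simp, by simp, ?_⟩
            intro z hz; simp only [Walk.support_copy, Walk.support_nil, List.mem_singleton] at hz
            exact ⟨p, le_refl p, by omega, by simp [hz]⟩
  | succ k ih =>
    intro p hpk
    obtain ⟨W, hlen, hpath, hsupp⟩ := ih (p+1) (by omega)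
    have hadj : G.Adj (Q.getVert p) (Q.getVert (p+1)) := Q.adj_getVert_succ (by omega)
    have hnmem : Q.getVert p ∉ W.support := by
      intro hmem
      obtain ⟨s, h1, h2, h3⟩ := hsupp _ hmem
      have := getVert_injOn hQ p (by omega) s (by omega) h3
      omega
    refine ⟨(Walk.cons hadj W).copy rfl (by congr 1; omega), by simpa using hlen,
      by rw [Walk.isPath_copy]; exact hpath.cons hnmem, ?_⟩
    intro z hz
    simp only [Walk.support_copy, Walk.support_cons, List.mem_cons] at hz
    rcases hz with rfl | hz
    · exact ⟨p, le_refl p, by omega, rfl⟩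
    · obtain ⟨s, h1, h2, h3⟩ := hsupp z hz
      exact ⟨s, by omega, by omega, h3⟩

lemma exists_seg' {G : SimpleGraph V} {x y : V} {Q : G.Walk x y} (hQ : Q.IsPath)
    (p q : ℕ) (hpq : p ≤ q) (hq : q ≤ Q.length) :
    ∃ W : G.Walk (Q.getVert p) (Q.getVert q), W.length = q - p ∧ W.IsPath ∧
      (∀ z ∈ W.support, ∃ s, p ≤ s ∧ s ≤ q ∧ z = Q.getVert s) := by
  obtain ⟨W, hlen, hpath, hsupp⟩ := exists_seg hQ (q - p) p (by omega)
  have hq' : p + (q - p) = q := by omega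
  refine ⟨W.copy rfl (by rw [hq']), by simpa using hlen, by rwa [Walk.isPath_copy], ?_⟩
  intro z hz
  obtain ⟨s, h1, h2, h3⟩ := hsupp z (by simpa using hz)
  exact ⟨s, h1, by omega, h3⟩


variable {V : Type*}

/-- Every connected graph on a finite vertex type has at least card V - 1 edges. -/
lemma card_le_ncard_edgeSet_add_one [Finite V] {H : SimpleGraph V} (h : H.Connected) :
    Nat.card V ≤ H.edgeSet.ncard + 1 := by
  have hne : Nonempty V := h.nonempty
  obtain ⟨d⟩ := hne
  -- map each w ≠ d to the first edge of a geodesic from w to d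
  have hstep : ∀ w : V, w ≠ d → ∃ z : V, H.Adj w z ∧ H.dist z d + 1 = H.dist w d := by
    intro w hw
    obtain ⟨p, hp, hplen⟩ := (h.preconnected w d).exists_path_of_dist
    have hpos : 0 < H.dist w d := h.pos_dist_of_ne hw
    have hnnil : ¬ p.Nil := by
      intro hnil
      rw [Walk.nil_iff_length_eq] at hnil
      omega
    refine ⟨p.getVert 1, p.adj_snd hnnil, ?_⟩
    have h1 : H.dist (p.getVert 1) d ≤ p.length - 1 := by
      have h0 : H.dist (p.getVert 1) d ≤ p.tail.length := SimpleGraph.dist_le p.tail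
      have h1 := Walk.length_tail_add_one hnnil
      omega
    have h2 : H.dist w d ≤ 1 + H.dist (p.getVert 1) d := by
      calc H.dist w d ≤ H.dist w (p.getVert 1) + H.dist (p.getVert 1) d := h.dist_triangle
        _ ≤ 1 + H.dist (p.getVert 1) d := by
            have : H.dist w (p.getVert 1) ≤ 1 :=
              SimpleGraph.dist_le (Walk.cons (p.adj_snd hnnil) Walk.nil)
            omega
    omega
  choose z hz hzd using hstep
  classical
  have hinj : Set.InjOn (fun w => if hw : w = d then s(d,d) else s(w, z w hw))
      {w : V | w ≠ d} := by
    intro a ha b hb hab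
    simp only [Set.mem_setOf_eq] at ha hb
    simp only [dif_neg ha, dif_neg hb, Sym2.eq_iff] at hab
    rcases hab with ⟨h1, _⟩ | ⟨h1, h2⟩
    · exact h1
    · exfalso
      have ha' := hzd a ha
      have hb' := hzd b hb
      rw [h2] at ha'
      rw [← h1] at hb'
      omega
  have hmaps : ∀ w ∈ {w : V | w ≠ d}, (fun w => if hw : w = d then s(d,d) else s(w, z w hw)) w
      ∈ H.edgeSet := by
    intro w hw
    simp only [Set.mem_setOf_eq] at hw
    simp only [dif_neg hw]
    exact hz w hw
  have hfin : H.edgeSet.Finite := Set.toFinite _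
  have := Set.ncard_le_ncard_of_injOn _ hmaps hinj hfin
  haveI : Nonempty V := ⟨d⟩
  have huniv : ({w : V | w ≠ d}).ncard = Nat.card V - 1 := by
    have hset : {w : V | w ≠ d} = Set.univ \ {d} := by ext w; simp
    rw [hset, Set.ncard_diff_singleton_of_mem (Set.mem_univ d), Set.ncard_univ]
  have hpos : 0 < Nat.card V := Nat.card_pos
  omega

/-- Deleting one edge keeps connectivity if its endpoints remain reachable. -/
lemma conn_delete {H : SimpleGraph V} (hH : H.Connected) {a b : V}
    (hr : (H.deleteEdges {s(a,b)}).Reachable a b) : (H.deleteEdges {s(a,b)}).Connected := by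
  rw [connected_iff]
  refine ⟨?_, hH.nonempty⟩
  intro x y
  obtain ⟨W⟩ := hH.preconnected x y
  induction W with
  | nil => exact Reachable.refl _
  | @cons xx zz yy h q ih =>
    refine Reachable.trans ?_ ih
    by_cases he : s(xx, zz) = s(a, b)
    · rw [Sym2.eq_iff] at he
      rcases he with ⟨rfl, rfl⟩ | ⟨rfl, rfl⟩
      · exact hr
      · exact hr.symm
    · exact Adj.reachable (by simp [he, h])

/-- In an acyclic graph, every path realizes the distance. -/
lemma path_length_eq_dist {H : SimpleGraph V} (hH : H.IsAcyclic) {x y : V}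
    {q : H.Walk x y} (hq : q.IsPath) : H.dist x y = q.length := by
  obtain ⟨p, hp, hplen⟩ := q.reachable.exists_path_of_dist
  have hu := hH.path_unique ⟨p, hp⟩ ⟨q, hq⟩
  rw [Subtype.ext_iff] at hu
  simp only at hu
  rw [← hplen, hu]

/-- midpoint along a geodesic -/
lemma exists_midpoint {H : SimpleGraph V} (hH : H.Connected) (x y : V) (k : ℕ)
    (hk : k ≤ H.dist x y) :
    ∃ z : V, H.dist x z = k ∧ H.dist z y = H.dist x y - k := by
  obtain ⟨p, hp, hplen⟩ := (hH.preconnected x y).exists_path_of_dist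
  obtain ⟨W1, hl1, hp1, hs1⟩ := exists_seg' hp 0 k (by omega) (by omega)
  obtain ⟨W2, hl2, hp2, hs2⟩ := exists_seg' hp k p.length (by omega) (le_refl _)
  refine ⟨p.getVert k, ?_⟩
  have e1 : H.dist x (p.getVert k) ≤ k := by
    have h0 := SimpleGraph.dist_le (W1.copy (by rw [Walk.getVert_zero]) rfl)
    simp only [Walk.length_copy] at h0
    omega
  have e2 : H.dist (p.getVert k) y ≤ p.length - k := by
    have h0 := SimpleGraph.dist_le (W2.copy rfl (by rw [Walk.getVert_length]))
    simp only [Walk.length_copy] at h0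
    omega
  have e3 : H.dist x y ≤ H.dist x (p.getVert k) + H.dist (p.getVert k) y := hH.dist_triangle
  constructor <;> omega

/-- Lower bound on walk lengths in a graph that is `T` plus one extra edge `{a,b}`. -/
lemma walk_bound {G T : SimpleGraph V} (hT : T.Connected) {a b : V}
    (hsub : ∀ ⦃p q : V⦄, G.Adj p q → T.Adj p q ∨ (p = a ∧ q = b) ∨ (p = b ∧ q = a)) :
    ∀ {x y : V} (W : G.Walk x y),
      T.dist x y ≤ W.length ∨ T.dist x a + 1 + T.dist b y ≤ W.length ∨
      T.dist x b + 1 + T.dist a y ≤ W.length := by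
  intro x y W
  induction W with
  | nil => left; simp
  | @cons x z y h q ih =>
    have hxz1 : T.dist x z ≤ 1 ∨ ((x = a ∧ z = b) ∨ (x = b ∧ z = a)) := by
      rcases hsub h with h' | h'
      · exact Or.inl (SimpleGraph.dist_le (Walk.cons h' Walk.nil))
      · exact Or.inr h'
    rw [Walk.length_cons]
    rcases hxz1 with hxz | ⟨⟨he1, he2⟩ | ⟨he1, he2⟩⟩
    · have t1 := hT.dist_triangle (u := x) (v := z) (w := y)
      have t2 := hT.dist_triangle (u := x) (v := z) (w := a)
      have t3 := hT.dist_triangle (u := x) (v := z) (w := b)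
      omega
    · subst he1; subst he2
      have hxx : T.dist x x = 0 := SimpleGraph.dist_self
      have hzz : T.dist z z = 0 := SimpleGraph.dist_self
      omega
    · subst he1; subst he2
      have hxx : T.dist x x = 0 := SimpleGraph.dist_self
      have hzz : T.dist z z = 0 := SimpleGraph.dist_self
      omega

/-- Chain through multiples of 3 in the distance-3 graph. -/
lemma d3_chain {G D : SimpleGraph V} (hG : G.Connected)
    (hD : ∀ p q : V, p ≠ q → G.dist p q = 3 → D.Adj p q) :
    ∀ (t : ℕ) (x y : V), G.dist x y = 3 * t → D.Reachable x y := by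
  intro t
  induction t with
  | zero =>
    intro x y hxy
    have : x = y := (hG.dist_eq_zero_iff).1 (by omega)
    exact this ▸ Reachable.refl x
  | succ t ih =>
    intro x y hxy
    obtain ⟨z, hz1, hz2⟩ := exists_midpoint hG x y 3 (by omega)
    have hne : x ≠ z := by
      intro h; rw [h, SimpleGraph.dist_self] at hz1; omega
    exact ((hD x z hne hz1).reachable).trans (ih z y (by omega))

/-- KEY: in a tree, distance from any vertex to the vertices of a fixed path is
`m + |p - ρ|` where `ρ` is the argmin. -/
lemma tree_dist_path [DecidableEq V] {T : SimpleGraph V} (hTc : T.Connected) (hTa : T.IsAcyclic)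
    {aa bb : V} {P : T.Walk bb aa} (hP : P.IsPath) (x : V) {ρ p : ℕ}
    (hρ : ρ ≤ P.length) (hp : p ≤ P.length)
    (hmin : ∀ s ≤ P.length, T.dist x (P.getVert ρ) ≤ T.dist x (P.getVert s)) :
    T.dist x (P.getVert p) = T.dist x (P.getVert ρ) + (max p ρ - min p ρ) := by
  obtain ⟨W, hWpath, hWlen⟩ := (hTc.preconnected x (P.getVert ρ)).exists_path_of_dist
  -- segment from getVert ρ to getVert p
  have hseg : ∃ S : T.Walk (P.getVert ρ) (P.getVert p), S.length = max p ρ - min p ρ ∧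
      S.IsPath ∧ ∀ z ∈ S.support, ∃ s, s ≤ P.length ∧ z = P.getVert s := by
    rcases le_total ρ p with hle | hle
    · obtain ⟨S, h1, h2, h3⟩ := exists_seg' hP ρ p hle hp
      exact ⟨S, by rw [h1]; omega, h2, fun z hz => by
        obtain ⟨s, hs1, hs2, hs3⟩ := h3 z hz; exact ⟨s, by omega, hs3⟩⟩
    · obtain ⟨S, h1, h2, h3⟩ := exists_seg' hP p ρ hle hρ
      refine ⟨S.reverse, by rw [Walk.length_reverse, h1]; omega, h2.reverse, fun z hz => ?_⟩
      rw [Walk.support_reverse, List.mem_reverse] at hz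
      obtain ⟨s, hs1, hs2, hs3⟩ := h3 z hz; exact ⟨s, by omega, hs3⟩
  obtain ⟨S, hSlen, hSpath, hSsupp⟩ := hseg
  have hApath : (W.append S).IsPath := by
    rw [Walk.isPath_def, Walk.support_append, List.nodup_append]
    refine ⟨hWpath.support_nodup, ?_, ?_⟩
    · have := hSpath.support_nodup
      rw [S.support_eq_cons] at this
      exact this.of_cons
    · intro z hzW z' hzS hzz
      rw [← hzz] at hzS
      have hzS' : z ∈ S.support := List.mem_of_mem_tail hzS
      obtain ⟨s, hs1, hs2⟩ := hSsupp z hzS'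
      -- z is on the geodesic W; show z = P.getVert ρ
      have h1 : T.dist x z ≤ (W.takeUntil z hzW).length := SimpleGraph.dist_le _
      have h2 : T.dist z (P.getVert ρ) ≤ (W.dropUntil z hzW).length := SimpleGraph.dist_le _
      have h3 : (W.takeUntil z hzW).length + (W.dropUntil z hzW).length = W.length := by
        rw [← Walk.length_append, Walk.take_spec]
      have h4 : T.dist x (P.getVert ρ) ≤ T.dist x z + T.dist z (P.getVert ρ) :=
        hTc.dist_triangle
      have h5 : T.dist x (P.getVert ρ) ≤ T.dist x (P.getVert s) := hmin s hs1
      rw [← hs2] at h5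
      have h6 : T.dist z (P.getVert ρ) = 0 := by omega
      have h7 : z = P.getVert ρ := (hTc.dist_eq_zero_iff).1 h6
      -- contradiction with nodup of S.support
      exfalso
      have := hSpath.support_nodup
      rw [S.support_eq_cons, List.nodup_cons] at this
      exact this.1 (h7 ▸ hzS)
  have := path_length_eq_dist hTa hApath
  rw [Walk.length_append, hWlen, hSlen] at this
  exact this

/-- Distance formula in a unicyclic graph from any vertex to the cycle vertices. -/
lemma unicyclic_dist_formula [DecidableEq V] {G T : SimpleGraph V} (hGc : G.Connected)
    {a b : V} (hab : G.Adj a b) (hT : T = G.deleteEdges {s(a,b)})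
    (hTc : T.Connected) (hTa : T.IsAcyclic)
    {P : T.Walk b a} (hP : P.IsPath) {n : ℕ} (hn : 7 ≤ n)
    (hPl : P.length + 1 = n) (x : V) {ρ p : ℕ}
    (hρ : ρ ≤ P.length) (hp : p ≤ P.length)
    (hmin : ∀ s ≤ P.length, T.dist x (P.getVert ρ) ≤ T.dist x (P.getVert s)) :
    G.dist x (P.getVert p) = T.dist x (P.getVert ρ) +
      min (max p ρ - min p ρ) (n - (max p ρ - min p ρ)) := by
  have hle : T ≤ G := hT ▸ SimpleGraph.deleteEdges_le _
  set y := P.getVert p with hy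
  set N := P.length with hN
  -- tree distances
  have e1 : T.dist x y = T.dist x (P.getVert ρ) + (max p ρ - min p ρ) :=
    tree_dist_path hTc hTa hP x hρ hp hmin
  have e2 : T.dist x (P.getVert N) = T.dist x (P.getVert ρ) + (N - ρ) := by
    have := tree_dist_path hTc hTa hP x hρ (le_refl N) hmin
    rw [this]; congr 1; omega
  have e3 : T.dist x (P.getVert 0) = T.dist x (P.getVert ρ) + ρ := by
    have := tree_dist_path hTc hTa hP x hρ (Nat.zero_le N) hmin
    rw [this]; congr 1
  have e4 : T.dist (P.getVert N) y = N - p := by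
    have hmin' : ∀ s ≤ P.length, T.dist (P.getVert N) (P.getVert N) ≤
        T.dist (P.getVert N) (P.getVert s) := by
      intro s _; rw [SimpleGraph.dist_self]; omega
    have := tree_dist_path hTc hTa hP (P.getVert N) (le_refl N) hp hmin'
    rw [this, SimpleGraph.dist_self]; omega
  have e5 : T.dist (P.getVert 0) y = p := by
    have hmin' : ∀ s ≤ P.length, T.dist (P.getVert 0) (P.getVert 0) ≤
        T.dist (P.getVert 0) (P.getVert s) := by
      intro s _; rw [SimpleGraph.dist_self]; omega
    have := tree_dist_path hTc hTa hP (P.getVert 0) (Nat.zero_le N) hp hmin'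
    rw [this, SimpleGraph.dist_self]; omega
  have hga : P.getVert N = a := P.getVert_length
  have hgb : P.getVert 0 = b := P.getVert_zero
  -- upper bounds
  have u1 : G.dist x y ≤ T.dist x y := Reachable.dist_anti hle (hTc.preconnected x y)
  have u2 : G.dist x y ≤ T.dist x a + 1 + T.dist b y := by
    obtain ⟨W1, _, hW1⟩ := (hTc.preconnected x a).exists_path_of_dist
    obtain ⟨W2, _, hW2⟩ := (hTc.preconnected b y).exists_path_of_dist
    have := SimpleGraph.dist_le ((W1.mapLe hle).append (Walk.cons hab (W2.mapLe hle)))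
    rw [Walk.length_append, Walk.length_cons, Walk.length_map, Walk.length_map,
      hW1, hW2] at this
    omega
  have u3 : G.dist x y ≤ T.dist x b + 1 + T.dist a y := by
    obtain ⟨W1, _, hW1⟩ := (hTc.preconnected x b).exists_path_of_dist
    obtain ⟨W2, _, hW2⟩ := (hTc.preconnected a y).exists_path_of_dist
    have := SimpleGraph.dist_le ((W1.mapLe hle).append (Walk.cons hab.symm (W2.mapLe hle)))
    rw [Walk.length_append, Walk.length_cons, Walk.length_map, Walk.length_map,
      hW1, hW2] at this
    omega
  -- lower bound
  have hsub : ∀ ⦃pp qq : V⦄, G.Adj pp qq → T.Adj pp qq ∨ (pp = a ∧ qq = b) ∨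
      (pp = b ∧ qq = a) := by
    intro pp qq hpq
    by_cases hepq : s(pp, qq) = s(a, b)
    · right; rw [Sym2.eq_iff] at hepq; tauto
    · left; rw [hT, SimpleGraph.deleteEdges_adj]; exact ⟨hpq, by simpa using hepq⟩
  have lower : T.dist x y ≤ G.dist x y ∨ T.dist x a + 1 + T.dist b y ≤ G.dist x y ∨
      T.dist x b + 1 + T.dist a y ≤ G.dist x y := by
    obtain ⟨W, hW⟩ := (hGc.preconnected x y).exists_walk_length_eq_dist
    have := walk_bound hTc hsub W
    rw [hW] at this
    exact this
  -- symmetric distances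
  have s1 : T.dist x a = T.dist x (P.getVert N) := by rw [hga]
  have s2 : T.dist x b = T.dist x (P.getVert 0) := by rw [hgb]
  have s3 : T.dist b y = T.dist (P.getVert 0) y := by rw [hgb]
  have s4 : T.dist a y = T.dist (P.getVert N) y := by rw [hga]
  rw [s1, e2] at u2 lower
  rw [s2, e3] at u3 lower
  rw [s3, e5] at u2 lower
  rw [s4, e4] at u3 lower
  rw [e1] at u1 lower
  omega

end StmtAux

open StmtAux

/-- A finite graph is *unicyclic* if it is connected and has exactly as many edges as
vertices (equivalently, it is connected and contains exactly one cycle). -/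
def Unicyclic {V : Type*} [Fintype V] [DecidableEq V] (G : SimpleGraph V)
    [DecidableRel G.Adj] : Prop :=
  G.Connected ∧ G.edgeFinset.card = Fintype.card V

/-- If `G` is a unicyclic graph whose unique cycle has length `n`, with `n ≥ 7`
and `gcd(n,3) = 1`, then `D₃(G)` is connected. -/
theorem stmt_5 {V : Type*} [Fintype V] [DecidableEq V] (G : SimpleGraph V)
    [DecidableRel G.Adj] (hG : Unicyclic G) (n : ℕ) (hn : 7 ≤ n) (hgcd : Nat.gcd n 3 = 1)
    (hcyc : ∃ (v : V) (c : G.Walk v v), c.IsCycle ∧ c.length = n) :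
    (distGraph G 3).Connected := by
  classical
  obtain ⟨hGc, hcard⟩ := hG
  obtain ⟨v, c, hcyc', hclen⟩ := hcyc
  cases c with
  | nil => rw [Walk.length_nil] at hclen; omega
  | @cons _ bb _ hadj c' =>
    obtain ⟨hc'path, he⟩ := (Walk.cons_isCycle_iff c' hadj).1 hcyc'
    rw [Walk.length_cons] at hclen
    -- the tree T
    have hedges : ∀ ed ∈ c'.edges, ed ∈ (G.deleteEdges {s(v, bb)}).edgeSet := by
      intro ed hed
      rw [SimpleGraph.edgeSet_deleteEdges]
      refine ⟨c'.edges_subset_edgeSet hed, ?_⟩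
      intro hmem
      rw [Set.mem_singleton_iff] at hmem
      exact he (hmem ▸ hed)
    have hTle : G.deleteEdges {s(v, bb)} ≤ G := SimpleGraph.deleteEdges_le _
    -- the path P  (from bb to v) of length n - 1
    refine ?_
    have hPlen : (c'.transfer _ hedges).length + 1 = n := by
      rw [Walk.length_transfer]; omega
    have hPpath : (c'.transfer (G.deleteEdges {s(v, bb)}) hedges).IsPath :=
      hc'path.transfer hedges
    have hTc : (G.deleteEdges {s(v, bb)}).Connected :=
      conn_delete hGc ⟨(c'.transfer _ hedges).reverse⟩
    -- edge counts
    have hGcard : G.edgeSet.ncard = Fintype.card V := by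
      rw [Set.ncard_eq_toFinset_card']
      exact hcard
    have hTcard : (G.deleteEdges {s(v, bb)}).edgeSet.ncard = Fintype.card V - 1 := by
      rw [SimpleGraph.edgeSet_deleteEdges, Set.ncard_diff_singleton_of_mem
        ((SimpleGraph.mem_edgeSet G).2 hadj), hGcard]
    have hVpos : 0 < Fintype.card V := Fintype.card_pos_iff.2 hGc.nonempty
    -- acyclicity of T
    have hTa : (G.deleteEdges {s(v, bb)}).IsAcyclic := by
      intro u0 q hq
      cases q with
      | nil => exact Walk.IsCycle.not_of_nil hq
      | @cons _ zz _ hadj2 q2 =>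
        obtain ⟨hq2path, he2⟩ := (Walk.cons_isCycle_iff q2 hadj2).1 hq
        have hedges2 : ∀ ed ∈ q2.edges,
            ed ∈ ((G.deleteEdges {s(v, bb)}).deleteEdges {s(u0, zz)}).edgeSet := by
          intro ed hed
          rw [SimpleGraph.edgeSet_deleteEdges]
          refine ⟨q2.edges_subset_edgeSet hed, ?_⟩
          intro hmem
          rw [Set.mem_singleton_iff] at hmem
          exact he2 (hmem ▸ hed)
        have hT'c : ((G.deleteEdges {s(v, bb)}).deleteEdges {s(u0, zz)}).Connected :=
          conn_delete hTc ⟨(q2.transfer _ hedges2).reverse⟩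
        have hcount := card_le_ncard_edgeSet_add_one hT'c
        have hT'card : ((G.deleteEdges {s(v, bb)}).deleteEdges {s(u0, zz)}).edgeSet.ncard
            = Fintype.card V - 2 := by
          rw [SimpleGraph.edgeSet_deleteEdges, Set.ncard_diff_singleton_of_mem
            ((SimpleGraph.mem_edgeSet (G.deleteEdges {s(v, bb)})).2 hadj2), hTcard]
          omega
        rw [hT'card, Nat.card_eq_fintype_card] at hcount
        -- card V ≥ 2 since v ≠ bb
        have h2 : 2 ≤ Fintype.card V := by
          have : Nontrivial V := ⟨v, bb, hadj.ne⟩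
          exact Fintype.one_lt_card
        omega
    -- abbreviations
    have hadj3 : ∀ p q : V, p ≠ q → G.dist p q = 3 → (distGraph G 3).Adj p q :=
      fun p q h1 h2 => (⟨h1, h2⟩ : p ≠ q ∧ G.dist p q = 3)
    -- distance between cycle vertices
    have cycle_dist : ∀ q p : ℕ, q ≤ (c'.transfer _ hedges).length →
        p ≤ (c'.transfer _ hedges).length →
        G.dist ((c'.transfer _ hedges).getVert q) ((c'.transfer _ hedges).getVert p)
          = min (max p q - min p q) (n - (max p q - min p q)) := by
      intro q p hq hp
      have hmin : ∀ s ≤ (c'.transfer _ hedges).length,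
          (G.deleteEdges {s(v, bb)}).dist ((c'.transfer _ hedges).getVert q)
            ((c'.transfer _ hedges).getVert q) ≤
          (G.deleteEdges {s(v, bb)}).dist ((c'.transfer _ hedges).getVert q)
            ((c'.transfer _ hedges).getVert s) := by
        intro s _
        rw [SimpleGraph.dist_self]
        omega
      have := unicyclic_dist_formula hGc hadj rfl hTc hTa hPpath hn hPlen
        ((c'.transfer _ hedges).getVert q) hq hp hmin
      rwa [SimpleGraph.dist_self, Nat.zero_add] at this
    -- step by 3 around the cycle
    have step3 : ∀ q : ℕ, q ≤ (c'.transfer _ hedges).length →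
        (distGraph G 3).Reachable ((c'.transfer _ hedges).getVert q)
          ((c'.transfer _ hedges).getVert ((q + 3) % n)) := by
      intro q hq
      have hnpos : 0 < n := by omega
      have hmod : (q + 3) % n < n := Nat.mod_lt _ hnpos
      have hp : (q + 3) % n ≤ (c'.transfer _ hedges).length := by omega
      have hd := cycle_dist q ((q + 3) % n) hq hp
      have hval : min (max ((q + 3) % n) q - min ((q + 3) % n) q)
          (n - (max ((q + 3) % n) q - min ((q + 3) % n) q)) = 3 := by
        rcases Nat.lt_or_ge (q + 3) n with hlt | hge
        · rw [Nat.mod_eq_of_lt hlt]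
          omega
        · have : (q + 3) % n = q + 3 - n := by
            rw [Nat.mod_eq_sub_mod hge, Nat.mod_eq_of_lt (by omega)]
          rw [this]
          omega
      rw [hval] at hd
      have hne : (c'.transfer _ hedges).getVert q ≠ (c'.transfer _ hedges).getVert ((q+3) % n) := by
        intro heq
        rw [heq, SimpleGraph.dist_self] at hd
        omega
      exact (hadj3 _ _ hne hd).reachable
    -- reach every multiple of 3
    have chain3 : ∀ t : ℕ, (distGraph G 3).Reachable ((c'.transfer _ hedges).getVert 0)
        ((c'.transfer _ hedges).getVert ((3 * t) % n)) := by
      intro t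
      induction t with
      | zero => rw [Nat.mul_zero, Nat.zero_mod]
      | succ t ih =>
        have hq : (3 * t) % n ≤ (c'.transfer _ hedges).length := by
          have := Nat.mod_lt (3 * t) (show 0 < n by omega)
          omega
        have := step3 ((3 * t) % n) hq
        rw [Nat.mod_add_mod] at this
        have heq : (3 * t + 3) = 3 * (t + 1) := by ring
        rw [heq] at this
        exact ih.trans this
    -- reach every cycle vertex from vertex 0
    have all_cyc : ∀ j : ℕ, j ≤ (c'.transfer _ hedges).length →
        (distGraph G 3).Reachable ((c'.transfer _ hedges).getVert 0)
          ((c'.transfer _ hedges).getVert j) := by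
      intro j hj
      have hcop : Nat.Coprime 3 n := by
        rw [Nat.Coprime, Nat.gcd_comm]; exact hgcd
      obtain ⟨m0, -, hm0⟩ := Nat.exists_mul_mod_eq_one_of_coprime hcop (by omega)
      have hkey : (3 * (m0 * j)) % n = j := by
        rw [← Nat.mul_assoc]
        have h1 : (3 * m0 * j) % n = ((3 * m0) % n * j) % n := by
          rw [Nat.mod_mul_mod]
        rw [h1, hm0, Nat.one_mul, Nat.mod_eq_of_lt (by omega)]
      have := chain3 (m0 * j)
      rwa [hkey] at this
    -- every vertex reaches some cycle vertex in D3
    have reach_cyc : ∀ x : V, ∃ p ≤ (c'.transfer _ hedges).length,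
        (distGraph G 3).Reachable x ((c'.transfer _ hedges).getVert p) := by
      intro x
      obtain ⟨ρ, hρmem, hρmin⟩ := Finset.exists_min_image
        (Finset.range ((c'.transfer _ hedges).length + 1))
        (fun s => (G.deleteEdges {s(v, bb)}).dist x ((c'.transfer _ hedges).getVert s))
        ⟨0, by simp⟩
      rw [Finset.mem_range] at hρmem
      have hρ : ρ ≤ (c'.transfer _ hedges).length := by omega
      have hmin : ∀ s ≤ (c'.transfer _ hedges).length,
          (G.deleteEdges {s(v, bb)}).dist x ((c'.transfer _ hedges).getVert ρ) ≤
          (G.deleteEdges {s(v, bb)}).dist x ((c'.transfer _ hedges).getVert s) := by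
        intro s hs
        exact hρmin s (Finset.mem_range.2 (by omega))
      set m := (G.deleteEdges {s(v, bb)}).dist x ((c'.transfer _ hedges).getVert ρ) with hm
      set k := (3 - m % 3) % 3 with hk
      have hk2 : k ≤ 2 := by omega
      have hNlen : (c'.transfer _ hedges).length + 1 = n := hPlen
      by_cases hcase : ρ + k ≤ (c'.transfer _ hedges).length
      · have hd := unicyclic_dist_formula hGc hadj rfl hTc hTa hPpath hn hPlen
          x hρ hcase hmin
        have hval : max (ρ + k) ρ - min (ρ + k) ρ = k := by omega
        rw [hval] at hd
        have hd' : G.dist x ((c'.transfer _ hedges).getVert (ρ + k)) = m + k := by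
          rw [hd]; omega
        have hdvd : 3 ∣ m + k := by omega
        obtain ⟨t, ht⟩ := hdvd
        exact ⟨ρ + k, hcase, d3_chain hGc hadj3 t x _ (by rw [hd', ht])⟩
      · have hρk : k ≤ ρ := by omega
        have hpk : ρ - k ≤ (c'.transfer _ hedges).length := by omega
        have hd := unicyclic_dist_formula hGc hadj rfl hTc hTa hPpath hn hPlen
          x hρ hpk hmin
        have hval : max (ρ - k) ρ - min (ρ - k) ρ = k := by omega
        rw [hval] at hd
        have hd' : G.dist x ((c'.transfer _ hedges).getVert (ρ - k)) = m + k := by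
          rw [hd]; omega
        have hdvd : 3 ∣ m + k := by omega
        obtain ⟨t, ht⟩ := hdvd
        exact ⟨ρ - k, hpk, d3_chain hGc hadj3 t x _ (by rw [hd', ht])⟩
    -- assemble connectivity
    rw [SimpleGraph.connected_iff]
    refine ⟨?_, hGc.nonempty⟩
    intro x y
    obtain ⟨px, hpx, rx⟩ := reach_cyc x
    obtain ⟨py, hpy, ry⟩ := reach_cyc y
    exact rx.trans (((all_cyc px hpx).symm.trans (all_cyc py hpy)).trans ry.symm)
end

section
/- Let G be a connected graph in which every pair of inner nodes is at distance divisible by 3, and suppose G is a tree. Then for any inner node a of G, the induced subgraph of D_3(G) on {b ∈ V(G) : 3 | d(a,b)} is a union of connected components of D_3(G); in particular D_3(G) is disconnected when this set is a proper nonempty subset. -/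
open SimpleGraph

/-- A vertex `u` is an *inner node* if it has degree ≥ 3 and at least two neighbours of
degree ≥ 2. -/
def InnerNode {V : Type*} [Fintype V] (G : SimpleGraph V) [DecidableRel G.Adj] (u : V) : Prop :=
  3 ≤ G.degree u ∧ ∃ v w : V, v ≠ w ∧ G.Adj u v ∧ G.Adj u w ∧ 2 ≤ G.degree v ∧ 2 ≤ G.degree w

section Aux

variable {V : Type*} [DecidableEq V] {G : SimpleGraph V}

/-- In a tree, any path has length equal to the distance between its endpoints. -/
lemma tree_path_len (hT : G.IsTree) {u v : V} {p : G.Walk u v} (hp : p.IsPath) :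
    p.length = G.dist u v := by
  obtain ⟨w, hw⟩ := (hT.isConnected.preconnected u v).exists_walk_length_eq_dist
  have h1 : w.bypass.length = G.dist u v :=
    le_antisymm (hw ▸ w.length_bypass_le) (SimpleGraph.dist_le w.bypass)
  have h2 := (hT.existsUnique_path u v).unique hp w.bypass_isPath
  rw [h2, h1]

lemma exists_geodesic (hT : G.IsTree) (u v : V) :
    ∃ p : G.Walk u v, p.IsPath ∧ p.length = G.dist u v := by
  obtain ⟨w, hw⟩ := (hT.isConnected.preconnected u v).exists_walk_length_eq_dist
  exact ⟨w.bypass, w.bypass_isPath, tree_path_len hT w.bypass_isPath⟩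

lemma concat_isPath {u v w : V} {p : G.Walk u v} (hp : p.IsPath) (h : G.Adj v w)
    (hw : w ∉ p.support) : (p.concat h).IsPath := by
  rw [← SimpleGraph.Walk.isPath_reverse_iff, SimpleGraph.Walk.reverse_concat]
  exact hp.reverse.cons (by simpa [SimpleGraph.Walk.support_reverse] using hw)

lemma first_edge {u v : V} (p : G.Walk u v) (h : p.length ≠ 0) :
    ∃ (n : V) (e : G.Adj u n) (t : G.Walk n v), p = SimpleGraph.Walk.cons e t := by
  cases p with
  | nil => simp at h
  | cons e t => exact ⟨_, e, t, rfl⟩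

/-- Distances to a fixed vertex change by exactly one along an edge of a tree. -/
lemma step (hT : G.IsTree) (a : V) {u v : V} (h : G.Adj u v) :
    G.dist a v = G.dist a u + 1 ∨ G.dist a u = G.dist a v + 1 := by
  classical
  obtain ⟨p, hp, hl⟩ := exists_geodesic hT a u
  by_cases hv : v ∈ p.support
  · right
    have h1 : (p.takeUntil v hv).length = G.dist a v := tree_path_len hT (hp.takeUntil hv)
    have h2 : (p.dropUntil v hv).length = G.dist v u := tree_path_len hT (hp.dropUntil hv)
    have h3 : G.dist v u = 1 := SimpleGraph.dist_eq_one_iff_adj.mpr h.symm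
    have h4 := congrArg SimpleGraph.Walk.length (p.take_spec hv)
    rw [SimpleGraph.Walk.length_append] at h4
    omega
  · left
    have h5 := tree_path_len hT (concat_isPath hp h hv)
    rw [SimpleGraph.Walk.length_concat] at h5
    omega

/-- No "local maximum" of the distance function along a path of a tree. -/
lemma no_turn (hT : G.IsTree) (a : V) {u v w : V} (huv : G.Adj u v) (hwv : G.Adj w v)
    (hne : u ≠ w) (hu : G.dist a v = G.dist a u + 1) (hw : G.dist a v = G.dist a w + 1) :
    False := by
  classical
  obtain ⟨p, hp, hlp⟩ := exists_geodesic hT a u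
  obtain ⟨q, hq, hlq⟩ := exists_geodesic hT a w
  have hvp : v ∉ p.support := by
    intro hv
    have h1 : (p.takeUntil v hv).length = G.dist a v := tree_path_len hT (hp.takeUntil hv)
    have h2 := p.length_takeUntil_le hv
    omega
  have hvq : v ∉ q.support := by
    intro hv
    have h1 : (q.takeUntil v hv).length = G.dist a v := tree_path_len hT (hq.takeUntil hv)
    have h2 := q.length_takeUntil_le hv
    omega
  have e := (hT.existsUnique_path a v).unique (concat_isPath hp huv hvp)
    (concat_isPath hq hwv hvq)
  obtain ⟨h1, -⟩ := SimpleGraph.Walk.concat_inj e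
  exact hne h1

/-- Predecessor on the geodesic towards `a`. -/
lemma pred (hT : G.IsTree) {a m : V} (hm : G.dist a m ≠ 0) :
    ∃ n : V, G.Adj m n ∧ G.dist a n + 1 = G.dist a m := by
  obtain ⟨p, hp, hl⟩ := exists_geodesic hT a m
  obtain ⟨n, e, t, ht⟩ := first_edge p.reverse
    (by rw [SimpleGraph.Walk.length_reverse]; omega)
  have htp : t.IsPath := by
    have := hp.reverse
    rw [ht] at this
    exact this.of_cons
  have hlen : t.reverse.length = G.dist a m - 1 := by
    have := congrArg SimpleGraph.Walk.length ht
    rw [SimpleGraph.Walk.length_reverse, SimpleGraph.Walk.length_cons] at this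
    rw [SimpleGraph.Walk.length_reverse]
    omega
  have hd : G.dist a n = G.dist a m - 1 := by
    rw [← tree_path_len hT htp.reverse, hlen]
  exact ⟨n, e, by omega⟩

end Aux

section Aux2

variable {V : Type*} [Fintype V] {G : SimpleGraph V} [DecidableRel G.Adj]

lemma deg2 {u x y : V} (hx : G.Adj u x) (hy : G.Adj u y) (hxy : x ≠ y) : 2 ≤ G.degree u := by
  classical
  have hsub : ({x, y} : Finset V) ⊆ G.neighborFinset u := by
    intro z hz
    rcases Finset.mem_insert.mp hz with rfl | hz
    · simpa using hx
    · rw [Finset.mem_singleton] at hz; subst hz; simpa using hy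
  have hc := Finset.card_le_card hsub
  rwa [Finset.card_insert_of_notMem (by simp [hxy]), Finset.card_singleton] at hc

lemma min_inner (hT : G.IsTree) {a m p q : V}
    (hmp : G.Adj m p) (hmq : G.Adj m q) (hpq : p ≠ q)
    (hp : G.dist a p = G.dist a m + 1) (hq : G.dist a q = G.dist a m + 1)
    (hm : G.dist a m ≠ 0) (ha : InnerNode G a) (hq2 : 2 ≤ G.degree q) :
    InnerNode G m := by
  classical
  obtain ⟨n, hmn, hn⟩ := pred hT hm
  have hnp : n ≠ p := by rintro rfl; omega
  have hnq : n ≠ q := by rintro rfl; omega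
  have hdeg3 : 3 ≤ G.degree m := by
    have hsub : ({p, q, n} : Finset V) ⊆ G.neighborFinset m := by
      intro z hz
      simp only [Finset.mem_insert, Finset.mem_singleton] at hz
      rcases hz with rfl | rfl | rfl
      · simpa using hmp
      · simpa using hmq
      · simpa using hmn
    have hc := Finset.card_le_card hsub
    rwa [Finset.card_insert_of_notMem (by simp [hpq, hnp.symm]),
      Finset.card_insert_of_notMem (by simp [hnq.symm]), Finset.card_singleton] at hc
  have hn2 : 2 ≤ G.degree n := by
    by_cases h0 : G.dist a n = 0
    · have : a = n := (hT.isConnected.dist_eq_zero_iff).mp h0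
      subst this
      exact le_trans (by norm_num) ha.1
    · obtain ⟨n', hnn', hn'⟩ := pred hT h0
      have : n' ≠ m := by rintro rfl; omega
      exact deg2 hnn' hmn.symm this
  exact ⟨hdeg3, q, n, by rintro rfl; omega, hmq, hmn, hq2, hn2⟩

lemma key (hT : G.IsTree)
    (hdiv : ∀ u v : V, InnerNode G u → InnerNode G v → 3 ∣ G.dist u v)
    {a : V} (ha : InnerNode G a) {x y : V} (hxy : G.dist x y = 3)
    (hx : 3 ∣ G.dist a x) : 3 ∣ G.dist a y := by
  classical
  obtain ⟨p, hp, hl⟩ := exists_geodesic hT x y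
  rw [hxy] at hl
  obtain ⟨b, h1, t1, rfl⟩ := first_edge p (by omega)
  rw [SimpleGraph.Walk.length_cons] at hl
  obtain ⟨c, h2, t2, rfl⟩ := first_edge t1 (by omega)
  rw [SimpleGraph.Walk.length_cons] at hl
  obtain ⟨d, h3, t3, rfl⟩ := first_edge t2 (by omega)
  rw [SimpleGraph.Walk.length_cons] at hl
  have hdy : d = y := by
    have h4 := SimpleGraph.dist_le t3
    have h5 : G.dist d y = 0 := by omega
    exact (hT.isConnected.dist_eq_zero_iff).mp h5
  subst d
  have ht3 : t3 = SimpleGraph.Walk.nil := by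
    have : t3.IsPath := (hp.of_cons.of_cons).of_cons
    rwa [SimpleGraph.Walk.isPath_iff_eq_nil] at this
  subst ht3
  have hnd := hp.support_nodup
  simp only [SimpleGraph.Walk.support_cons, SimpleGraph.Walk.support_nil,
    List.nodup_cons, List.mem_cons, List.mem_singleton, List.not_mem_nil] at hnd
  have hxc : x ≠ c := by tauto
  have hby : b ≠ y := by tauto
  have s1 := step hT a h1
  have s2 := step hT a h2
  have s3 := step hT a h3
  rcases s1 with s1 | s1 <;> rcases s2 with s2 | s2 <;> rcases s3 with s3 | s3
  · omega
  · exact (no_turn hT a h2 h3.symm hby s2 s3).elim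
  · exact (no_turn hT a h1 h2.symm hxc s1 s2).elim
  · exact (no_turn hT a h1 h2.symm hxc s1 s2).elim
  · -- pattern - + + : inner node at b
    have hm : G.dist a b ≠ 0 := by intro h0; omega
    have hb : InnerNode G b :=
      min_inner hT h1.symm h2 hxc s1 s2 hm ha (deg2 h2.symm h3 hby)
    have := hdiv a b ha hb
    omega
  · exact (no_turn hT a h2 h3.symm hby s2 s3).elim
  · -- pattern - - + : inner node at c
    have hm : G.dist a c ≠ 0 := by intro h0; omega
    have hc : InnerNode G c :=
      min_inner hT h3 h2.symm hby.symm s3 s2 hm ha (deg2 h1.symm h2 hxc)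
    have := hdiv a c ha hc
    omega
  · omega

end Aux2

/-- Let `G` be a tree in which every pair of inner nodes is at distance
divisible by 3, and let `a` be an inner node. Then the set `{b : 3 ∣ d(a,b)}` is a union
of connected components of `D₃(G)`; in particular, if it is a proper subset of the vertex
set, `D₃(G)` is disconnected. -/
theorem stmt_10 {V : Type*} [Fintype V] (G : SimpleGraph V) [DecidableRel G.Adj]
    (hT : G.IsTree)
    (hdiv : ∀ u v : V, InnerNode G u → InnerNode G v → 3 ∣ G.dist u v)
    (a : V) (ha : InnerNode G a) :
    (∀ b ∈ {b : V | 3 ∣ G.dist a b},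
      ((distGraph G 3).connectedComponentMk b).supp ⊆ {b : V | 3 ∣ G.dist a b}) ∧
    ({b : V | 3 ∣ G.dist a b} ≠ Set.univ → ¬ (distGraph G 3).Connected) := by
  classical
  have hwalk : ∀ {u v : V}, (distGraph G 3).Walk u v → 3 ∣ G.dist a u → 3 ∣ G.dist a v := by
    intro u v w
    induction w with
    | nil => exact id
    | cons h p ih =>
      intro hu
      exact ih (key hT hdiv ha (h : _ ≠ _ ∧ G.dist _ _ = 3).2 hu)
  have part1 : ∀ b ∈ {b : V | 3 ∣ G.dist a b},
      ((distGraph G 3).connectedComponentMk b).supp ⊆ {b : V | 3 ∣ G.dist a b} := by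
    intro b hb x hx
    rw [SimpleGraph.ConnectedComponent.mem_supp_iff] at hx
    have hr : (distGraph G 3).Reachable b x := (SimpleGraph.ConnectedComponent.exact hx).symm
    exact hr.elim fun w => hwalk w hb
  refine ⟨part1, fun hne hc => ?_⟩
  obtain ⟨c, hc'⟩ := (Set.ne_univ_iff_exists_notMem _).mp hne
  have hb : a ∈ {b : V | 3 ∣ G.dist a b} := by simp [SimpleGraph.dist_self]
  have hmem : c ∈ ((distGraph G 3).connectedComponentMk a).supp := by
    rw [SimpleGraph.ConnectedComponent.mem_supp_iff]
    exact SimpleGraph.ConnectedComponent.sound (hc.preconnected c a)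
  exact hc' (part1 a hb hmem)
end

section
/- Let G be a graph containing two vertices x, y with N(x) \ {y} = N(y) \ {x} (x and y have the same neighbours apart from each other). Then D_3(G) is connected if and only if D_3(G − x) is connected, provided G has at least 3 vertices. -/
open SimpleGraph

section Aux

variable {V : Type*} {G : SimpleGraph V} {x y : V}

/-- The inclusion homomorphism from an induced subgraph. -/
private def valHom (G : SimpleGraph V) (s : Set V) : (G.induce s) →g G :=
  ⟨Subtype.val, fun h => h⟩

private lemma twin_adj (hnbr : G.neighborSet x \ {y} = G.neighborSet y \ {x})
    {a : V} (h : G.Adj x a) (hay : a ≠ y) : G.Adj y a := by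
  have : a ∈ G.neighborSet x \ {y} := ⟨h, hay⟩
  rw [hnbr] at this
  exact this.1

/-- Walk surgery: any walk between vertices ≠ x can be rerouted to avoid x. -/
private lemma avoid (hxy : x ≠ y) (hN : ∀ a, G.Adj x a → a ≠ y → G.Adj y a) :
    ∀ n (u v : V) (hu : u ≠ x) (hv : v ≠ x) (w : G.Walk u v), w.length ≤ n →
    ∃ w' : (G.induce {v : V | v ≠ x}).Walk ⟨u, hu⟩ ⟨v, hv⟩, w'.length ≤ w.length := by
  intro n
  induction n with
  | zero =>
    intro u v hu hv w hw
    cases w with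
    | nil => exact ⟨.nil, by simp⟩
    | cons h w1 => simp at hw
  | succ n ih =>
    intro u v hu hv w hw
    cases w with
    | nil => exact ⟨.nil, le_refl _⟩
    | @cons _ b _ h w1 =>
      by_cases hbx : b = x
      · have hxb := hbx.symm
        subst hxb
        cases w1 with
        | nil => exact absurd rfl hv
        | @cons _ c _ h2 w2 =>
          have hcx : c ≠ x := fun e => G.loopless.irrefl x (e ▸ h2)
          have hw2 : w2.length ≤ n := by
            simp only [SimpleGraph.Walk.length_cons] at hw ⊢; omega
          obtain ⟨w2', hw2'⟩ := ih c v hcx hv w2 hw2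
          by_cases huc : u = c
          · subst huc
            exact ⟨w2', hw2'.trans (by simp only [SimpleGraph.Walk.length_cons]; omega)⟩
          · by_cases huy : u = y
            · have hcy : c ≠ y := fun e => huc (huy.trans e.symm)
              have hadj : G.Adj u c := by rw [huy]; exact hN c h2 hcy
              refine ⟨SimpleGraph.Walk.cons
                (show (G.induce {v : V | v ≠ x}).Adj ⟨u, hu⟩ ⟨c, hcx⟩ from hadj) w2', ?_⟩
              simp only [SimpleGraph.Walk.length_cons]; omega
            · by_cases hcy : c = y
              · subst hcy
                have hadj : G.Adj u c := (hN u h.symm huy).symm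
                refine ⟨SimpleGraph.Walk.cons
                  (show (G.induce {v : V | v ≠ x}).Adj ⟨u, hu⟩ ⟨c, hcx⟩ from hadj) w2', ?_⟩
                simp only [SimpleGraph.Walk.length_cons]; omega
              · have hA1 : G.Adj u y := (hN u h.symm huy).symm
                have hA2 : G.Adj y c := hN c h2 hcy
                refine ⟨SimpleGraph.Walk.cons
                  (show (G.induce {v : V | v ≠ x}).Adj ⟨u, hu⟩ ⟨y, hxy.symm⟩ from hA1)
                  (SimpleGraph.Walk.cons
                    (show (G.induce {v : V | v ≠ x}).Adj ⟨y, hxy.symm⟩ ⟨c, hcx⟩ from hA2)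
                    w2'), ?_⟩
                simp only [SimpleGraph.Walk.length_cons]; omega
      · have hw1 : w1.length ≤ n := by
          simp only [SimpleGraph.Walk.length_cons] at hw; omega
        obtain ⟨w1', hw1'⟩ := ih b v hbx hv w1 hw1
        refine ⟨SimpleGraph.Walk.cons
          (show (G.induce {v : V | v ≠ x}).Adj ⟨u, hu⟩ ⟨b, hbx⟩ from h) w1', ?_⟩
        simp only [SimpleGraph.Walk.length_cons]; omega

/-- Distances in `G − x` agree with distances in `G` for vertices ≠ x. -/
private lemma dist_induce_eq (hxy : x ≠ y) (hN : ∀ a, G.Adj x a → a ≠ y → G.Adj y a)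
    (u v : {v : V | v ≠ x}) :
    (G.induce {v : V | v ≠ x}).dist u v = G.dist u.1 v.1 := by
  obtain ⟨u, hu⟩ := u
  obtain ⟨v, hv⟩ := v
  show (G.induce {v : V | v ≠ x}).dist ⟨u, hu⟩ ⟨v, hv⟩ = G.dist u v
  by_cases hr : G.Reachable u v
  · obtain ⟨p, hp⟩ := hr.exists_walk_length_eq_dist
    obtain ⟨p', hp'⟩ := avoid hxy hN p.length u v hu hv p le_rfl
    have h1 : (G.induce {v : V | v ≠ x}).dist ⟨u, hu⟩ ⟨v, hv⟩ ≤ G.dist u v :=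
      le_trans (SimpleGraph.dist_le p') (by omega)
    have hr' : (G.induce {v : V | v ≠ x}).Reachable ⟨u, hu⟩ ⟨v, hv⟩ := ⟨p'⟩
    obtain ⟨q, hq⟩ := hr'.exists_walk_length_eq_dist
    have h2 : G.dist u v ≤ (G.induce {v : V | v ≠ x}).dist ⟨u, hu⟩ ⟨v, hv⟩ := by
      have := SimpleGraph.dist_le (q.map (valHom G {v : V | v ≠ x}))
      rwa [SimpleGraph.Walk.length_map, hq] at this
    omega
  · have hr' : ¬ (G.induce {v : V | v ≠ x}).Reachable ⟨u, hu⟩ ⟨v, hv⟩ := fun ⟨q⟩ =>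
      hr ⟨q.map (valHom G {v : V | v ≠ x})⟩
    rw [SimpleGraph.dist_eq_zero_of_not_reachable hr,
      SimpleGraph.dist_eq_zero_of_not_reachable hr']

/-- Converting a walk from x into a walk from its twin y. -/
private lemma twin_walk (hN : ∀ a, G.Adj x a → a ≠ y → G.Adj y a)
    {v : V} (hvx : v ≠ x) (w : G.Walk x v) :
    ∃ w' : G.Walk y v, w'.length ≤ w.length := by
  cases w with
  | nil => exact absurd rfl hvx
  | @cons _ b _ h w1 =>
    by_cases hby : b = y
    · subst hby
      exact ⟨w1, by simp only [SimpleGraph.Walk.length_cons]; omega⟩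
    · exact ⟨SimpleGraph.Walk.cons (hN b h hby) w1, le_refl _⟩

/-- Twins are at the same distance from every other vertex. -/
private lemma twin_dist (hN : ∀ a, G.Adj x a → a ≠ y → G.Adj y a)
    (hN' : ∀ a, G.Adj y a → a ≠ x → G.Adj x a)
    {v : V} (hvx : v ≠ x) (hvy : v ≠ y) : G.dist x v = G.dist y v := by
  by_cases hr : G.Reachable x v
  · obtain ⟨p, hp⟩ := hr.exists_walk_length_eq_dist
    obtain ⟨p', hp'⟩ := twin_walk hN hvx p
    have hry : G.Reachable y v := ⟨p'⟩
    obtain ⟨q, hq⟩ := hry.exists_walk_length_eq_dist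
    obtain ⟨q', hq'⟩ := twin_walk hN' hvy q
    have d1 := SimpleGraph.dist_le p'
    have d2 := SimpleGraph.dist_le q'
    omega
  · have hry : ¬ G.Reachable y v := fun ⟨q⟩ => by
      obtain ⟨q', _⟩ := twin_walk hN' hvy q
      exact hr ⟨q'⟩
    rw [SimpleGraph.dist_eq_zero_of_not_reachable hr,
      SimpleGraph.dist_eq_zero_of_not_reachable hry]

/-- Twins are never at distance exactly 3. -/
private lemma twin_dist_ne_three (hN : ∀ a, G.Adj x a → a ≠ y → G.Adj y a) :
    G.dist x y ≠ 3 := by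
  intro h3
  have hne : G.dist x y ≠ 0 := by omega
  obtain ⟨p, hp⟩ := SimpleGraph.exists_walk_of_dist_ne_zero hne
  cases p with
  | nil => rw [SimpleGraph.Walk.length_nil] at hp; omega
  | @cons _ b _ h w1 =>
    by_cases hby : b = y
    · subst hby
      have := SimpleGraph.dist_le (SimpleGraph.Walk.cons h .nil)
      simp only [SimpleGraph.Walk.length_cons, SimpleGraph.Walk.length_nil] at this
      omega
    · have hadj : G.Adj b y := (hN b h hby).symm
      have := SimpleGraph.dist_le (SimpleGraph.Walk.cons h (SimpleGraph.Walk.cons hadj .nil))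
      simp only [SimpleGraph.Walk.length_cons, SimpleGraph.Walk.length_nil] at this
      omega

end Aux

/-- If `x ≠ y` are vertices with the same neighbours apart from each other,
and `G` has at least 3 vertices, then `D₃(G)` is connected iff `D₃(G − x)` is connected. -/
theorem stmt_14 {V : Type*} [Fintype V] (G : SimpleGraph V) (x y : V) (hxy : x ≠ y)
    (hnbr : G.neighborSet x \ {y} = G.neighborSet y \ {x})
    (hcard : 3 ≤ Fintype.card V) :
    (distGraph G 3).Connected ↔
      (distGraph (G.induce {v : V | v ≠ x}) 3).Connected := by
  classical
  have hN : ∀ a, G.Adj x a → a ≠ y → G.Adj y a := fun a h hay => twin_adj hnbr h hay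
  have hN' : ∀ a, G.Adj y a → a ≠ x → G.Adj x a := fun a h hax => twin_adj hnbr.symm h hax
  have hde : ∀ (u v : {v : V | v ≠ x}),
      (G.induce {v : V | v ≠ x}).dist u v = G.dist u.1 v.1 :=
    dist_induce_eq hxy hN
  have hd3 : G.dist x y ≠ 3 := twin_dist_ne_three hN
  have htd : ∀ (v : V), v ≠ x → v ≠ y → G.dist x v = G.dist y v :=
    fun v hvx hvy => twin_dist hN hN' hvx hvy
  constructor
  · intro hc
    refine SimpleGraph.Connected.map
      ⟨fun v => if h : v = x then ⟨y, hxy.symm⟩ else ⟨v, h⟩, ?_⟩ ?_ hc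
    · rintro a b ⟨hab, hd⟩
      by_cases hax : a = x
      · rw [hax] at hd
        have hbx : b ≠ x := fun e => hab (hax.trans e.symm)
        have hby : b ≠ y := fun e => hd3 (e ▸ hd)
        simp only [dif_pos hax, dif_neg hbx]
        refine ⟨fun e => hby (congrArg Subtype.val e).symm, ?_⟩
        rw [hde ⟨y, hxy.symm⟩ ⟨b, hbx⟩]
        rw [show G.dist (⟨y, hxy.symm⟩ : {v : V | v ≠ x}).1 (⟨b, hbx⟩ : {v : V | v ≠ x}).1
          = G.dist y b from rfl, ← htd b hbx hby]
        exact hd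
      · by_cases hbx : b = x
        · rw [hbx] at hd
          have hay : a ≠ y := fun e => hd3 (by rwa [SimpleGraph.dist_comm, e] at hd)
          simp only [dif_pos hbx, dif_neg hax]
          refine ⟨fun e => hay (congrArg Subtype.val e), ?_⟩
          rw [hde ⟨a, hax⟩ ⟨y, hxy.symm⟩]
          rw [show G.dist (⟨a, hax⟩ : {v : V | v ≠ x}).1 (⟨y, hxy.symm⟩ : {v : V | v ≠ x}).1
            = G.dist a y from rfl, SimpleGraph.dist_comm, ← htd a hax hay,
            SimpleGraph.dist_comm]
          exact hd
        · simp only [dif_neg hax, dif_neg hbx]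
          refine ⟨fun e => hab (congrArg Subtype.val e), ?_⟩
          rw [hde ⟨a, hax⟩ ⟨b, hbx⟩]
          exact hd
    · rintro ⟨v, hv⟩
      exact ⟨v, dif_neg (show ¬ v = x from hv)⟩
  · intro hc'
    let g : (distGraph (G.induce {v : V | v ≠ x}) 3) →g (distGraph G 3) :=
      ⟨Subtype.val, fun {a b} hadj => ⟨fun e => hadj.1 (Subtype.ext e), by
        have := hadj.2
        rwa [hde a b] at this⟩⟩
    have R : ∀ (u v : V), u ≠ x → v ≠ x → (distGraph G 3).Reachable u v := by
      intro u v hu hv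
      obtain ⟨p⟩ := hc'.preconnected ⟨u, hu⟩ ⟨v, hv⟩
      exact ⟨(p.map g).copy (by rfl) (by rfl)⟩
    -- find a vertex adjacent to x in D₃(G)
    obtain ⟨w, hwx, hwy⟩ : ∃ w : V, w ≠ x ∧ w ≠ y := by
      by_contra hcon
      push_neg at hcon
      have hsub : (Finset.univ : Finset V) ⊆ {x, y} := by
        intro w _
        rcases ne_or_eq w x with h1 | h1
        · simp [hcon w h1]
        · simp [h1]
      have h1 := Finset.card_le_card hsub
      have h2 : ({x, y} : Finset V).card ≤ 2 :=
        (Finset.card_insert_le _ _).trans (by simp)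
      simp only [Finset.card_univ] at h1
      omega
    have hyw : (⟨y, hxy.symm⟩ : {v : V | v ≠ x}) ≠ ⟨w, hwx⟩ :=
      fun e => hwy (congrArg Subtype.val e).symm
    obtain ⟨p⟩ := hc'.preconnected ⟨y, hxy.symm⟩ ⟨w, hwx⟩
    obtain ⟨z, hz⟩ : ∃ z : V, (distGraph G 3).Adj x z := by
      cases p with
      | nil => exact absurd rfl hyw
      | @cons _ z _ hadj _ =>
        obtain ⟨hne, hdz⟩ := hadj
        have hzy : z.1 ≠ y := fun e => hne (Subtype.ext e.symm)
        have hdz' : G.dist y z.1 = 3 := by rwa [hde ⟨y, hxy.symm⟩ z] at hdz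
        refine ⟨z.1, fun e => z.2 e.symm, ?_⟩
        rw [htd z.1 z.2 hzy]
        exact hdz'
    have hxr : ∀ (v : V), v ≠ x → (distGraph G 3).Reachable x v := by
      intro v hv
      exact (SimpleGraph.Adj.reachable hz).trans (R z v (fun e => hz.1 e.symm) hv)
    have : Nonempty V := ⟨x⟩
    refine SimpleGraph.Connected.mk ?_
    intro u v
    by_cases hux : u = x
    · rw [hux]
      by_cases hvx : v = x
      · rw [hvx]
      · exact hxr v hvx
    · by_cases hvx : v = x
      · rw [hvx]
        exact (hxr u hux).symm
      · exact R u v hux hvx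
end
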